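/- Let m ≥ 1 and 0 ≤ k ≤ m/2, and set λ = (3m-2k, m+2k). Then Σ_{α,β ⊢ m} c^λ_{2α,2β} − Σ_{γ ⊢ m+1, δ ⊢ m-1} c^λ_{2γ,2δ} = 1, where all partitions α, β, γ, δ have at most two parts and c denotes the Littlewood–Richardson coefficient. -/

import Mathlib

open MvPolynomial

noncomputable section SchurFramework

/-- `hPolyZ ι d` : the complete homogeneous symmetric polynomial of degree `d`
(zero for negative `d`). -/
def hPolyZ (ι : Type) [Fintype ι] [DecidableEq ι] (d : ℤ) : MvPolynomial ι ℤ :=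
  if 0 ≤ d then MvPolynomial.hsymm ι ℤ d.toNat else 0

/-- The Schur polynomial associated to the partition `l` (a weakly decreasing list),
defined by the Jacobi–Trudi formula `s_l = det (h_{l_i - i + j})`. -/
def schurPoly (ι : Type) [Fintype ι] [DecidableEq ι] (l : List ℕ) : MvPolynomial ι ℤ :=
  Matrix.det (Matrix.of fun i j : Fin l.length =>
    hPolyZ ι ((l.get i : ℤ) - (i : ℕ) + (j : ℕ)))

/-- The Vandermonde determinant `∏_{i<j} (x_i - x_j) = a_δ`. -/
def vanderPoly (N : ℕ) : MvPolynomial (Fin N) ℤ :=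
  ∏ i : Fin N, ∏ j ∈ Finset.Ioi i, (X i - X j)

/-- The exponent vector `l + δ` where `δ = (N-1, N-2, …, 0)`. -/
def expVec (N : ℕ) (l : List ℕ) : Fin N →₀ ℕ :=
  Finsupp.equivFunOnFinite.symm (fun i => l.getD (i : ℕ) 0 + (N - 1 - (i : ℕ)))

/-- The multiplicity of the Schur polynomial `s_l` in a symmetric polynomial `f`
in `N ≥ length l` variables: since `f·a_δ = Σ_κ mult_κ · a_{κ+δ}`, this multiplicity
is the coefficient of the monomial `x^{l+δ}` in `f · a_δ`. -/
def schurMult (N : ℕ) (f : MvPolynomial (Fin N) ℤ) (l : List ℕ) : ℤ :=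
  MvPolynomial.coeff (expVec N l) (f * vanderPoly N)

/-- The Littlewood–Richardson coefficient `c^lam_{mu, nu}`, defined as the multiplicity
of `s_lam` in `s_mu · s_nu` (computed in sufficiently many variables). -/
def lrCoeff (lam mu nu : List ℕ) : ℤ :=
  schurMult (lam.length + mu.length + nu.length)
    (schurPoly (Fin (lam.length + mu.length + nu.length)) mu *
      schurPoly (Fin (lam.length + mu.length + nu.length)) nu) lam

/-- `l` is a partition: a weakly decreasing list of positive integers. -/
def IsPartitionList (l : List ℕ) : Prop := l.Pairwise (· ≥ ·) ∧ ∀ x ∈ l, 0 < x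

/-- The Kronecker coefficient `g_{mu, nu, lam}`, defined via
`s_lam(x·y) = Σ g_{mu,nu,lam} s_mu(x) s_nu(y)`: it is the coefficient of
`x^{mu+δ} y^{nu+δ}` in `s_lam(x·y) · a_δ(x) · a_δ(y)`. -/
def kron (mu nu lam : List ℕ) : ℤ :=
  MvPolynomial.coeff
    (Finsupp.equivFunOnFinite.symm (Sum.elim
      (fun i : Fin mu.length => mu.getD (i : ℕ) 0 + (mu.length - 1 - (i : ℕ)))
      (fun j : Fin nu.length => nu.getD (j : ℕ) 0 + (nu.length - 1 - (j : ℕ)))))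
    ((MvPolynomial.aeval
        (fun p : Fin mu.length × Fin nu.length =>
          (X (Sum.inl p.1) * X (Sum.inr p.2) :
            MvPolynomial (Fin mu.length ⊕ Fin nu.length) ℤ))
        (schurPoly (Fin mu.length × Fin nu.length) lam))
      * (∏ i : Fin mu.length, ∏ j ∈ Finset.Ioi i, (X (Sum.inl i) - X (Sum.inl j)))
      * (∏ i : Fin nu.length, ∏ j ∈ Finset.Ioi i, (X (Sum.inr i) - X (Sum.inr j))))

/-- The character of the plethysm `S^lam(Sym² V)` for `dim V = N`: the Schur polynomial
`s_lam` evaluated at the products `x_i x_j`, `i ≤ j` (the monomials of `Sym²`). -/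
def plethSym2 (N : ℕ) (lam : List ℕ) : MvPolynomial (Fin N) ℤ :=
  MvPolynomial.aeval
    (fun p : {q : Fin N × Fin N // q.1 ≤ q.2} =>
      (X p.1.1 * X p.1.2 : MvPolynomial (Fin N) ℤ))
    (schurPoly {q : Fin N × Fin N // q.1 ≤ q.2} lam)

/-- The conjugate (transpose) partition. -/
def conjList (l : List ℕ) : List ℕ :=
  (List.range (l.headD 0)).map (fun i => (l.filter (fun a => decide (i < a))).length)

end SchurFramework

section Helpers

private lemma sumGE (n c : ℕ) :
    (∑ i ∈ Finset.range n, if c ≤ i then (1:ℤ) else 0) = (n:ℤ) - (min n c : ℕ) := by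
  induction n with
  | zero => simp
  | succ n ih =>
    rw [Finset.sum_range_succ, ih]
    split_ifs with h
    · push_cast; omega
    · push_cast; omega

private lemma sum_ind_eq {α : Type*} [DecidableEq α] (s : Finset α) (x : α) (Q : α → Prop)
    [DecidablePred Q] :
    (∑ j ∈ s, if j = x ∧ Q j then (1:ℤ) else 0) = if x ∈ s ∧ Q x then 1 else 0 := by
  rw [show (fun j => if j = x ∧ Q j then (1:ℤ) else 0)
      = fun j => if j = x then (if Q j then (1:ℤ) else 0) else 0 from funext fun j => by
        by_cases h1 : j = x <;> by_cases h2 : Q j <;> simp [h1, h2]]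
  rw [Finset.sum_ite_eq' s x (fun j => if Q j then (1:ℤ) else 0)]
  by_cases h1 : x ∈ s <;> by_cases h2 : Q x <;> simp [h1, h2]

private lemma core (a k : ℕ) (hk : k ≤ a) :
    (∑ s ∈ Finset.range (a+1), ∑ t ∈ Finset.range (a+1),
       ((if k + t ≤ a + s ∧ s + t ≤ a + k then (1:ℤ) else 0)
         - (if a + t + 1 ≤ s + k then (1:ℤ) else 0)))
    - (∑ u ∈ Finset.range (a+1), ∑ v ∈ Finset.range a,
       ((if v + k + 1 ≤ a + u ∧ u + v ≤ a + k then (1:ℤ) else 0)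
         - (if a + v + 2 ≤ u + k then (1:ℤ) else 0))) = 1 := by
  have hsplit : ∀ s : ℕ, (∑ t ∈ Finset.range (a+1),
       ((if k + t ≤ a + s ∧ s + t ≤ a + k then (1:ℤ) else 0)
         - (if a + t + 1 ≤ s + k then (1:ℤ) else 0)))
      = (∑ t ∈ Finset.range a,
       ((if k + (t+1) ≤ a + s ∧ s + (t+1) ≤ a + k then (1:ℤ) else 0)
         - (if a + (t+1) + 1 ≤ s + k then (1:ℤ) else 0)))
        + ((if k + 0 ≤ a + s ∧ s + 0 ≤ a + k then (1:ℤ) else 0)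
         - (if a + 0 + 1 ≤ s + k then (1:ℤ) else 0)) := by
    intro s
    exact Finset.sum_range_succ' _ a
  rw [Finset.sum_congr rfl fun s _ => hsplit s, Finset.sum_add_distrib]
  rw [add_sub_right_comm, ← Finset.sum_sub_distrib]
  have hpair : ∀ s ∈ Finset.range (a+1),
      (∑ t ∈ Finset.range a,
        ((if k + (t+1) ≤ a + s ∧ s + (t+1) ≤ a + k then (1:ℤ) else 0)
         - (if a + (t+1) + 1 ≤ s + k then (1:ℤ) else 0)))
      - (∑ v ∈ Finset.range a,
       ((if v + k + 1 ≤ a + s ∧ s + v ≤ a + k then (1:ℤ) else 0)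
         - (if a + v + 2 ≤ s + k then (1:ℤ) else 0)))
      = - (if a + k - s ∈ Finset.range a ∧ k ≤ a + k - s ∧ s ≤ a + k then 1 else 0) := by
    intro s hs
    rw [← Finset.sum_sub_distrib]
    have : ∀ t ∈ Finset.range a,
        ((if k + (t+1) ≤ a + s ∧ s + (t+1) ≤ a + k then (1:ℤ) else 0)
         - (if a + (t+1) + 1 ≤ s + k then (1:ℤ) else 0))
        - ((if t + k + 1 ≤ a + s ∧ s + t ≤ a + k then (1:ℤ) else 0)
         - (if a + t + 2 ≤ s + k then (1:ℤ) else 0))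
        = - (if t = a + k - s ∧ (k ≤ t ∧ s ≤ a + k) then (1:ℤ) else 0) := by
      intro t ht
      have ht' : t < a := Finset.mem_range.mp ht
      have hs' : s < a + 1 := Finset.mem_range.mp hs
      split_ifs <;> omega
    rw [Finset.sum_congr rfl this, Finset.sum_neg_distrib]
    rw [sum_ind_eq (Finset.range a) (a + k - s) (fun t => k ≤ t ∧ s ≤ a + k)]
  rw [Finset.sum_congr rfl hpair]
  have e1 : ∀ s ∈ Finset.range (a+1),
      (- (if a + k - s ∈ Finset.range a ∧ k ≤ a + k - s ∧ s ≤ a + k then (1:ℤ) else 0))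
      = - (if k + 1 ≤ s then (1:ℤ) else 0) := by
    intro s hs
    have hs' : s < a + 1 := Finset.mem_range.mp hs
    simp only [Finset.mem_range]
    split_ifs <;> omega
  have e2 : ∀ s ∈ Finset.range (a+1),
      ((if k + 0 ≤ a + s ∧ s + 0 ≤ a + k then (1:ℤ) else 0)
         - (if a + 0 + 1 ≤ s + k then (1:ℤ) else 0))
      = 1 - (if a + 1 - k ≤ s then (1:ℤ) else 0) := by
    intro s hs
    have hs' : s < a + 1 := Finset.mem_range.mp hs
    split_ifs <;> omega
  rw [Finset.sum_congr rfl e1, Finset.sum_congr rfl e2, Finset.sum_neg_distrib,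
    Finset.sum_sub_distrib, sumGE, sumGE, Finset.sum_const, Finset.card_range]
  simp only [nsmul_eq_mul, mul_one]
  push_cast
  omega

/-- the exponent vector `(A, B, 0, 0, 0, 0)`. -/
private noncomputable def e2 (A B : ℕ) : Fin 6 →₀ ℕ := Finsupp.single 0 A + Finsupp.single 1 B

private lemma e2_apply (A B : ℕ) (i : Fin 6) :
    e2 A B i = if i = 0 then A else if i = 1 then B else 0 := by
  fin_cases i <;> simp [e2, Finsupp.single_apply]

private lemma e2_inj {A B C D : ℕ} : e2 A B = e2 C D ↔ A = C ∧ B = D := by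
  constructor
  · intro h
    constructor
    · have := DFunLike.congr_fun h (0 : Fin 6); simpa [e2_apply] using this
    · have := DFunLike.congr_fun h (1 : Fin 6); simpa [e2_apply] using this
  · rintro ⟨rfl, rfl⟩; rfl

private lemma e2_le {a b C D : ℕ} : e2 a b ≤ e2 C D ↔ a ≤ C ∧ b ≤ D := by
  rw [Finsupp.le_def]
  constructor
  · intro h
    exact ⟨by simpa [e2_apply] using h 0, by simpa [e2_apply] using h 1⟩
  · intro ⟨h1, h2⟩ i
    fin_cases i <;> simp [e2_apply, h1, h2]

private lemma e2_sub {a b C D : ℕ} : e2 C D - e2 a b = e2 (C - a) (D - b) := by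
  ext i
  rw [Finsupp.tsub_apply]
  fin_cases i <;> simp [e2_apply]

private noncomputable def g6 : Fin 6 → MvPolynomial (Fin 6) ℤ :=
  fun i => if (i : ℕ) < 2 then X i else 0

private noncomputable def kil : MvPolynomial (Fin 6) ℤ →ₐ[ℤ] MvPolynomial (Fin 6) ℤ :=
  aeval g6

private lemma kil_X (i : Fin 6) : kil (X i) = if (i : ℕ) < 2 then X i else 0 := by
  simp [kil, g6]

private lemma coeff_kil (f : MvPolynomial (Fin 6) ℤ) (v : Fin 6 →₀ ℕ)
    (hv : ∀ i : Fin 6, 2 ≤ (i : ℕ) → v i = 0) :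
    coeff v (kil f) = coeff v f := by
  induction f using MvPolynomial.induction_on generalizing v with
  | C a => simp [kil]
  | add p q hp hq => simp [map_add, coeff_add, hp v hv, hq v hv]
  | mul_X p n hp =>
    rw [map_mul, kil_X]
    by_cases hn : (n : ℕ) < 2
    · rw [if_pos hn]
      rw [MvPolynomial.coeff_mul_X', MvPolynomial.coeff_mul_X']
      split_ifs with h
      · exact hp _ (fun i hi => by
          rw [Finsupp.tsub_apply, hv i hi, Nat.zero_sub])
      · rfl
    · rw [if_neg hn, mul_zero]
      rw [MvPolynomial.coeff_mul_X']
      have : n ∉ v.support := by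
        simp only [Finsupp.mem_support_iff, not_not]
        exact hv n (by omega)
      rw [if_neg this, coeff_zero]

private lemma rep_lemma (m : Multiset (Fin 6)) (hm : ∀ i ∈ m, (i : ℕ) < 2) :
    m = Multiset.replicate (m.count 0) 0 + Multiset.replicate (m.count 1) 1 := by
  ext b
  rw [Multiset.count_add, Multiset.count_replicate, Multiset.count_replicate]
  by_cases hb0 : b = 0
  · subst hb0; simp
  · by_cases hb1 : b = 1
    · subst hb1; simp
    · have : b ∉ m := fun hb => by
        have := hm b hb
        have hb0' : (b : ℕ) ≠ 0 := fun h => hb0 (Fin.ext h)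
        have hb1' : (b : ℕ) ≠ 1 := fun h => hb1 (Fin.ext h)
        omega
      rw [Multiset.count_eq_zero_of_notMem this]
      simp [Ne.symm hb0, Ne.symm hb1]

private lemma kil_hsymm (n : ℕ) :
    kil (hsymm (Fin 6) ℤ n) = ∑ a ∈ Finset.range (n+1), X 0 ^ a * X 1 ^ (n - a) := by
  rw [hsymm, map_sum]
  have hterm : ∀ s : Sym (Fin 6) n,
      kil ((s.1.map X).prod) = ((s.1.map g6)).prod := by
    intro s
    rw [map_multiset_prod, Multiset.map_map]
    congr 1
    apply Multiset.map_congr rfl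
    intro i _
    simp [kil]
  rw [Finset.sum_congr rfl fun s _ => hterm s]
  rw [← Finset.sum_filter_add_sum_filter_not Finset.univ
    (fun s : Sym (Fin 6) n => ∀ i ∈ s.1, (i : ℕ) < 2)]
  have hbad : ∀ s ∈ Finset.filter (fun s : Sym (Fin 6) n => ¬ ∀ i ∈ s.1, (i : ℕ) < 2) Finset.univ,
      ((s.1.map g6)).prod = 0 := by
    intro s hs
    rw [Finset.mem_filter] at hs
    push_neg at hs
    obtain ⟨i, hi, hge⟩ := hs.2
    apply Multiset.prod_eq_zero
    rw [Multiset.mem_map]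
    exact ⟨i, hi, by rw [g6, if_neg (by omega)]⟩
  rw [Finset.sum_eq_zero hbad, add_zero]
  refine Finset.sum_bij' (fun s _ => s.1.count 0)
    (fun a ha => (⟨Multiset.replicate a 0 + Multiset.replicate (n - a) 1, by
      have := Finset.mem_range.mp ha
      simp only [Multiset.card_add, Multiset.card_replicate]
      omega⟩ : Sym (Fin 6) n)) ?_ ?_ ?_ ?_ ?_
  · intro s hs
    show s.1.count 0 ∈ Finset.range (n+1)
    rw [Finset.mem_range]
    have : s.1.count 0 ≤ Multiset.card s.1 := Multiset.count_le_card _ _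
    rw [s.2] at this
    omega
  · intro a ha
    refine Finset.mem_filter.mpr ?_
    refine ⟨Finset.mem_univ _, ?_⟩
    intro i hi
    rcases Multiset.mem_add.mp hi with h | h
    · rw [Multiset.eq_of_mem_replicate h]; norm_num
    · rw [Multiset.eq_of_mem_replicate h]; norm_num
  · intro s hs
    rw [Finset.mem_filter] at hs
    have hrep := rep_lemma s.1 hs.2
    have hcard : s.1.count 0 + s.1.count 1 = n := by
      have h' : Multiset.card s.1 = n := s.2
      conv_lhs at h' => rw [hrep]
      simpa [Multiset.card_replicate] using h'
    apply Subtype.ext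
    show Multiset.replicate (s.1.count 0) 0 + Multiset.replicate (n - s.1.count 0) 1 = s.1
    conv_rhs => rw [hrep]
    rw [show n - s.1.count 0 = s.1.count 1 from by omega]
  · intro a ha
    have := Finset.mem_range.mp ha
    show Multiset.count 0 (Multiset.replicate a 0 + Multiset.replicate (n - a) 1) = a
    rw [Multiset.count_add, Multiset.count_replicate, Multiset.count_replicate]
    norm_num
  · intro s hs
    rw [Finset.mem_filter] at hs
    have hrep := rep_lemma s.1 hs.2
    have hcard : s.1.count 0 + s.1.count 1 = n := by
      have h' : Multiset.card s.1 = n := s.2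
      conv_lhs at h' => rw [hrep]
      simpa [Multiset.card_replicate] using h'
    show (s.1.map g6).prod = X 0 ^ (s.1.count 0) * X 1 ^ (n - s.1.count 0)
    conv_lhs => rw [hrep]
    rw [Multiset.map_add, Multiset.map_replicate, Multiset.map_replicate,
      Multiset.prod_add, Multiset.prod_replicate, Multiset.prod_replicate]
    rw [show g6 0 = X 0 from by rw [g6]; norm_num,
        show g6 1 = X 1 from by rw [g6]; norm_num]
    rw [show n - s.1.count 0 = s.1.count 1 from by omega]

private noncomputable def S2 (p q : ℕ) : MvPolynomial (Fin 6) ℤ :=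
  ∑ j ∈ Finset.Icc q p, X 0 ^ j * X 1 ^ (p + q - j)

private lemma hY : (X 0 - X 1 : MvPolynomial (Fin 6) ℤ) ≠ 0 :=
  sub_ne_zero.mpr (fun h => (by decide : (0 : Fin 6) ≠ 1) (MvPolynomial.X_injective h))

/-- generic telescoping -/
private lemma tel (q M N : ℕ) (hNM : N ≤ M) :
    (X 0 - X 1 : MvPolynomial (Fin 6) ℤ) * (∑ i ∈ Finset.range (N+1), X 0 ^ (q+i) * X 1 ^ (M-i))
      = X 0 ^ (q+N+1) * X 1 ^ (M-N) - X 0 ^ q * X 1 ^ (M+1) := by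
  rw [Finset.mul_sum]
  have key : ∀ i ∈ Finset.range (N+1),
      (X 0 - X 1 : MvPolynomial (Fin 6) ℤ) * (X 0 ^ (q+i) * X 1 ^ (M-i))
        = (fun i => X 0 ^ (q+i) * X 1 ^ (M+1-i)) (i+1) - (fun i => X 0 ^ (q+i) * X 1 ^ (M+1-i)) i := by
    intro i hi
    have hiN : i ≤ N := by exact Nat.lt_succ_iff.mp (Finset.mem_range.mp hi)
    simp only []
    rw [show M + 1 - (i+1) = M - i from by omega, show M + 1 - i = (M - i) + 1 from by omega,
      show q + (i+1) = (q+i) + 1 from by omega]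
    ring
  rw [Finset.sum_congr rfl key, Finset.sum_range_sub (fun i => X 0 ^ (q+i) * X 1 ^ (M+1-i))]
  rw [show M + 1 - (N+1) = M - N from by omega, show M + 1 - 0 = M + 1 from rfl,
    show q + (N+1) = q + N + 1 from by omega, show q + 0 = q from rfl]

private lemma altS2 (p q : ℕ) (hq : q ≤ p) :
    (X 0 - X 1 : MvPolynomial (Fin 6) ℤ) * S2 p q
      = X 0 ^ (p+1) * X 1 ^ q - X 0 ^ q * X 1 ^ (p+1) := by
  have hre : S2 p q = ∑ i ∈ Finset.range (p - q + 1), X 0 ^ (q+i) * X 1 ^ (p - i) := by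
    rw [S2, ← Finset.Ico_add_one_right_eq_Icc, Finset.sum_Ico_eq_sum_range]
    rw [show p + 1 - q = p - q + 1 from by omega]
    apply Finset.sum_congr rfl
    intro i hi
    have : i ≤ p - q := by exact Nat.lt_succ_iff.mp (Finset.mem_range.mp hi)
    rw [show p + q - (q + i) = p - i from by omega]
  rw [hre, tel q p (p - q) (by omega),
    show q + (p - q) + 1 = p + 1 from by omega, show p - (p - q) = q from by omega]


private lemma schur_expand (p q : ℕ) :
    schurPoly (Fin 6) [p, q] =
      hPolyZ (Fin 6) ((p:ℤ)) * hPolyZ (Fin 6) ((q:ℤ) - 1 + 1)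
        - hPolyZ (Fin 6) ((p:ℤ) + 1) * hPolyZ (Fin 6) ((q:ℤ) - 1) := by
  rw [schurPoly]
  rw [Matrix.det_fin_two]
  simp [Matrix.of_apply]

private lemma hPolyZ_nat (n : ℕ) : hPolyZ (Fin 6) ((n:ℤ)) = hsymm (Fin 6) ℤ n := by
  rw [hPolyZ, if_pos (by positivity), Int.toNat_natCast]

private lemma kil_hsymm_S2 (n : ℕ) : kil (hsymm (Fin 6) ℤ n) = S2 n 0 := by
  rw [kil_hsymm, S2, ← Finset.Ico_add_one_right_eq_Icc, Nat.Ico_zero_eq_range]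
  exact Finset.sum_congr rfl fun a _ => by rw [Nat.add_zero]

private lemma E1 (n : ℕ) :
    (X 0 - X 1 : MvPolynomial (Fin 6) ℤ) * kil (hsymm (Fin 6) ℤ n)
      = X 0 ^ (n+1) - X 1 ^ (n+1) := by
  rw [kil_hsymm_S2, altS2 n 0 (Nat.zero_le _), pow_zero, mul_one, pow_zero, one_mul]

private lemma kil_schur (p q : ℕ) (hq : q ≤ p) :
    kil (schurPoly (Fin 6) [p, q]) = S2 p q := by
  rw [schur_expand]
  rcases Nat.eq_zero_or_pos q with hq0 | hqpos
  · subst hq0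
    rw [show ((0:ℕ):ℤ) - 1 + 1 = ((0:ℕ):ℤ) from by ring,
      show ((0:ℕ):ℤ) - 1 = -1 from by norm_num,
      show hPolyZ (Fin 6) (-1) = 0 from by rw [hPolyZ, if_neg (by norm_num)]]
    rw [mul_zero, sub_zero, hPolyZ_nat, hPolyZ_nat, map_mul, kil_hsymm_S2, kil_hsymm_S2]
    have h0 : S2 0 0 = 1 := by
      rw [S2]
      norm_num
    rw [h0, mul_one]
  · obtain ⟨c, rfl⟩ : ∃ c, q = c + 1 := ⟨q - 1, by omega⟩
    rw [show ((c+1:ℕ):ℤ) - 1 + 1 = ((c+1:ℕ):ℤ) from by ring,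
      show ((c+1:ℕ):ℤ) - 1 = ((c:ℕ):ℤ) from by push_cast; ring,
      show ((p:ℤ)) + 1 = ((p+1:ℕ):ℤ) from by push_cast; ring]
    rw [hPolyZ_nat, hPolyZ_nat, hPolyZ_nat, hPolyZ_nat]
    apply mul_left_cancel₀ hY
    apply mul_left_cancel₀ hY
    rw [show (X 0 - X 1 : MvPolynomial (Fin 6) ℤ) *
        ((X 0 - X 1) * kil (hsymm (Fin 6) ℤ p * hsymm (Fin 6) ℤ (c+1)
          - hsymm (Fin 6) ℤ (p+1) * hsymm (Fin 6) ℤ c))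
      = ((X 0 - X 1) * kil (hsymm (Fin 6) ℤ p)) * ((X 0 - X 1) * kil (hsymm (Fin 6) ℤ (c+1)))
        - ((X 0 - X 1) * kil (hsymm (Fin 6) ℤ (p+1))) * ((X 0 - X 1) * kil (hsymm (Fin 6) ℤ c))
      from by rw [map_sub, map_mul, map_mul]; ring]
    rw [E1, E1, E1, E1, altS2 p (c+1) hq]
    ring

private lemma vander_eq :
    vanderPoly 6 = - Matrix.det (Matrix.vandermonde (fun i : Fin 6 => (X i : MvPolynomial (Fin 6) ℤ))) := by
  rw [Matrix.det_vandermonde, vanderPoly]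
  have step1 : ∀ i : Fin 6, ∏ j ∈ Finset.Ioi i, ((X i : MvPolynomial (Fin 6) ℤ) - X j)
      = (-1) ^ (Finset.Ioi i).card * ∏ j ∈ Finset.Ioi i, ((X j : MvPolynomial (Fin 6) ℤ) - X i) := by
    intro i
    rw [← Finset.prod_const, ← Finset.prod_mul_distrib]
    exact Finset.prod_congr rfl fun j _ => by ring
  rw [Finset.prod_congr rfl fun i _ => step1 i, Finset.prod_mul_distrib]
  rw [show ∏ i : Fin 6, ((-1 : MvPolynomial (Fin 6) ℤ)) ^ (Finset.Ioi i).card = -1 from by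
    rw [Fin.prod_univ_six]
    norm_num [Fin.card_Ioi, show ((3:Fin 6):ℕ) = 3 from rfl, show ((4:Fin 6):ℕ) = 4 from rfl,
      show ((5:Fin 6):ℕ) = 5 from rfl]]
  ring


private noncomputable def wperm (σ : Equiv.Perm (Fin 6)) : Fin 6 →₀ ℕ :=
  ∑ i : Fin 6, Finsupp.single (σ i) (i : ℕ)

private lemma wperm_apply (σ : Equiv.Perm (Fin 6)) (j : Fin 6) :
    wperm σ j = ((σ.symm j : Fin 6) : ℕ) := by
  rw [wperm, Finsupp.finset_sum_apply]
  rw [Finset.sum_eq_single (σ.symm j) ?_ ?_]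
  · rw [Finsupp.single_apply, if_pos (σ.apply_symm_apply j)]
  · intro i _ hi
    rw [Finsupp.single_apply, if_neg (fun h => hi (by rw [← h, Equiv.symm_apply_apply]))]
  · intro h; exact absurd (Finset.mem_univ _) h

private def rho : Equiv.Perm (Fin 6) := Fin.revPerm

private def rho' : Equiv.Perm (Fin 6) := Equiv.swap 0 1 * Fin.revPerm

private lemma vand (f : MvPolynomial (Fin 6) ℤ) (l1 l2 : ℕ) (hl2 : 1 ≤ l2) :
    coeff (expVec 6 [l1, l2]) (f * vanderPoly 6)
      = coeff (e2 l1 l2) f - coeff (e2 (l1+1) (l2-1)) f := by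
  have v0 : expVec 6 [l1, l2] 0 = l1 + 5 := rfl
  have v1 : expVec 6 [l1, l2] 1 = l2 + 4 := rfl
  have v2 : expVec 6 [l1, l2] 2 = 3 := rfl
  have v3 : expVec 6 [l1, l2] 3 = 2 := rfl
  have v4 : expVec 6 [l1, l2] 4 = 1 := rfl
  have v5 : expVec 6 [l1, l2] 5 = 0 := rfl
  have hM : ∀ σ : Equiv.Perm (Fin 6),
      (∏ i, Matrix.vandermonde (fun i : Fin 6 => (X i : MvPolynomial (Fin 6) ℤ)) (σ i) i)
        = monomial (wperm σ) 1 := by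
    intro σ
    rw [wperm, MvPolynomial.monomial_sum_one]
    exact Finset.prod_congr rfl fun i _ => by
      rw [Matrix.vandermonde_apply, MvPolynomial.X_pow_eq_monomial]
  rw [vander_eq, mul_neg, coeff_neg, Matrix.det_apply, Finset.mul_sum, MvPolynomial.coeff_sum]
  have hterm : ∀ σ : Equiv.Perm (Fin 6),
      coeff (expVec 6 [l1, l2]) (f * (Equiv.Perm.sign σ • ∏ i,
          Matrix.vandermonde (fun i : Fin 6 => (X i : MvPolynomial (Fin 6) ℤ)) (σ i) i))
        = ((Equiv.Perm.sign σ : ℤ)) *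
            (if wperm σ ≤ expVec 6 [l1, l2] then coeff (expVec 6 [l1, l2] - wperm σ) f else 0) := by
    intro σ
    rw [hM σ, Units.smul_def, mul_smul_comm, MvPolynomial.coeff_smul, smul_eq_mul,
      MvPolynomial.coeff_mul_monomial']
    split_ifs <;> ring
  rw [Finset.sum_congr rfl fun σ _ => hterm σ]
  have hvanish : ∀ σ ∈ (Finset.univ : Finset (Equiv.Perm (Fin 6))),
      σ ∉ ({rho, rho'} : Finset (Equiv.Perm (Fin 6))) →
      ((Equiv.Perm.sign σ : ℤ)) *
            (if wperm σ ≤ expVec 6 [l1, l2] then coeff (expVec 6 [l1, l2] - wperm σ) f else 0) = 0 := by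
    intro σ _ hσ
    rw [if_neg, mul_zero]
    intro hle
    rw [Finsupp.le_def] at hle
    have h5 : σ.symm 5 = 0 := by
      have := hle 5
      rw [wperm_apply, v5] at this
      exact Fin.ext (by omega)
    have h4 : σ.symm 4 = 1 := by
      have := hle 4
      rw [wperm_apply, v4] at this
      have hne : σ.symm 4 ≠ σ.symm 5 := σ.symm.injective.ne (by decide)
      rw [h5] at hne
      have hv : (σ.symm 4 : ℕ) ≠ 0 := fun h => hne (Fin.ext h)
      exact Fin.ext (by omega)
    have h3 : σ.symm 3 = 2 := by
      have := hle 3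
      rw [wperm_apply, v3] at this
      have hne5 : σ.symm 3 ≠ σ.symm 5 := σ.symm.injective.ne (by decide)
      have hne4 : σ.symm 3 ≠ σ.symm 4 := σ.symm.injective.ne (by decide)
      rw [h5] at hne5; rw [h4] at hne4
      have e5 : (σ.symm 3 : ℕ) ≠ 0 := fun h => hne5 (Fin.ext h)
      have e4 : (σ.symm 3 : ℕ) ≠ 1 := fun h => hne4 (Fin.ext h)
      exact Fin.ext (by omega)
    have h2 : σ.symm 2 = 3 := by
      have := hle 2
      rw [wperm_apply, v2] at this
      have hne5 : σ.symm 2 ≠ σ.symm 5 := σ.symm.injective.ne (by decide)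
      have hne4 : σ.symm 2 ≠ σ.symm 4 := σ.symm.injective.ne (by decide)
      have hne3 : σ.symm 2 ≠ σ.symm 3 := σ.symm.injective.ne (by decide)
      rw [h5] at hne5; rw [h4] at hne4; rw [h3] at hne3
      have e5 : (σ.symm 2 : ℕ) ≠ 0 := fun h => hne5 (Fin.ext h)
      have e4 : (σ.symm 2 : ℕ) ≠ 1 := fun h => hne4 (Fin.ext h)
      have e3 : (σ.symm 2 : ℕ) ≠ 2 := fun h => hne3 (Fin.ext h)
      exact Fin.ext (by omega)
    have hone : σ.symm 1 = 4 ∨ σ.symm 1 = 5 := by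
      have hne5 : σ.symm 1 ≠ σ.symm 5 := σ.symm.injective.ne (by decide)
      have hne4 : σ.symm 1 ≠ σ.symm 4 := σ.symm.injective.ne (by decide)
      have hne3 : σ.symm 1 ≠ σ.symm 3 := σ.symm.injective.ne (by decide)
      have hne2 : σ.symm 1 ≠ σ.symm 2 := σ.symm.injective.ne (by decide)
      rw [h5] at hne5; rw [h4] at hne4; rw [h3] at hne3; rw [h2] at hne2
      have e5 : (σ.symm 1 : ℕ) ≠ 0 := fun h => hne5 (Fin.ext h)
      have e4 : (σ.symm 1 : ℕ) ≠ 1 := fun h => hne4 (Fin.ext h)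
      have e3 : (σ.symm 1 : ℕ) ≠ 2 := fun h => hne3 (Fin.ext h)
      have e2' : (σ.symm 1 : ℕ) ≠ 3 := fun h => hne2 (Fin.ext h)
      have hlt : (σ.symm 1 : ℕ) < 6 := (σ.symm 1).isLt
      have : (σ.symm 1 : ℕ) = 4 ∨ (σ.symm 1 : ℕ) = 5 := by omega
      rcases this with h | h
      · exact Or.inl (Fin.ext h)
      · exact Or.inr (Fin.ext h)
    have hzero : σ.symm 0 = 4 ∨ σ.symm 0 = 5 := by
      have hne5 : σ.symm 0 ≠ σ.symm 5 := σ.symm.injective.ne (by decide)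
      have hne4 : σ.symm 0 ≠ σ.symm 4 := σ.symm.injective.ne (by decide)
      have hne3 : σ.symm 0 ≠ σ.symm 3 := σ.symm.injective.ne (by decide)
      have hne2 : σ.symm 0 ≠ σ.symm 2 := σ.symm.injective.ne (by decide)
      rw [h5] at hne5; rw [h4] at hne4; rw [h3] at hne3; rw [h2] at hne2
      have e5 : (σ.symm 0 : ℕ) ≠ 0 := fun h => hne5 (Fin.ext h)
      have e4 : (σ.symm 0 : ℕ) ≠ 1 := fun h => hne4 (Fin.ext h)
      have e3 : (σ.symm 0 : ℕ) ≠ 2 := fun h => hne3 (Fin.ext h)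
      have e2' : (σ.symm 0 : ℕ) ≠ 3 := fun h => hne2 (Fin.ext h)
      have hlt : (σ.symm 0 : ℕ) < 6 := (σ.symm 0).isLt
      have : (σ.symm 0 : ℕ) = 4 ∨ (σ.symm 0 : ℕ) = 5 := by omega
      rcases this with h | h
      · exact Or.inl (Fin.ext h)
      · exact Or.inr (Fin.ext h)
    apply hσ
    simp only [Finset.mem_insert, Finset.mem_singleton]
    have hne10 : σ.symm 1 ≠ σ.symm 0 := σ.symm.injective.ne (by decide)
    rcases hone with h1 | h1
    · have h0 : σ.symm 0 = 5 := by
        rcases hzero with h | h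
        · exact absurd (h1.trans h.symm) hne10
        · exact h
      left
      have hs : σ.symm = rho.symm := by
        apply Equiv.ext
        intro j
        fin_cases j
        · exact h0.trans (by decide)
        · exact h1.trans (by decide)
        · exact h2.trans (by decide)
        · exact h3.trans (by decide)
        · exact h4.trans (by decide)
        · exact h5.trans (by decide)
      have := congrArg Equiv.symm hs
      rwa [Equiv.symm_symm, Equiv.symm_symm] at this
    · have h0 : σ.symm 0 = 4 := by
        rcases hzero with h | h
        · exact h
        · exact absurd (h1.trans h.symm) hne10
      right
      have hs : σ.symm = rho'.symm := by
        apply Equiv.ext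
        intro j
        fin_cases j
        · exact h0.trans (by decide)
        · exact h1.trans (by decide)
        · exact h2.trans (by decide)
        · exact h3.trans (by decide)
        · exact h4.trans (by decide)
        · exact h5.trans (by decide)
      have := congrArg Equiv.symm hs
      rwa [Equiv.symm_symm, Equiv.symm_symm] at this
  have esub := Finset.sum_subset
    (Finset.subset_univ ({rho, rho'} : Finset (Equiv.Perm (Fin 6)))) hvanish
  rw [← esub, Finset.sum_pair (by decide : rho ≠ rho')]
  have wr : ∀ j : Fin 6, wperm rho j = 5 - (j : ℕ) := by
    intro j
    rw [wperm_apply]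
    fin_cases j <;> decide
  have wr' : ∀ j : Fin 6, wperm rho' j =
      if j = 0 then 4 else if j = 1 then 5 else 5 - (j : ℕ) := by
    intro j
    rw [wperm_apply]
    fin_cases j <;> decide
  have hle_rho : wperm rho ≤ expVec 6 [l1, l2] := by
    rw [Finsupp.le_def]
    intro j
    rw [wr]
    fin_cases j
    · exact (by omega : (5:ℕ) - 0 ≤ l1 + 5)
    · exact (by omega : (5:ℕ) - 1 ≤ l2 + 4)
    · exact (by omega : (5:ℕ) - 2 ≤ 3)
    · exact (by omega : (5:ℕ) - 3 ≤ 2)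
    · exact (by omega : (5:ℕ) - 4 ≤ 1)
    · exact (by omega : (5:ℕ) - 5 ≤ 0)
  have hle_rho' : wperm rho' ≤ expVec 6 [l1, l2] := by
    rw [Finsupp.le_def]
    intro j
    rw [wr']
    fin_cases j
    · exact (by omega : (4:ℕ) ≤ l1 + 5)
    · exact (by omega : (5:ℕ) ≤ l2 + 4)
    · exact (by omega : (5:ℕ) - 2 ≤ 3)
    · exact (by omega : (5:ℕ) - 3 ≤ 2)
    · exact (by omega : (5:ℕ) - 4 ≤ 1)
    · exact (by omega : (5:ℕ) - 5 ≤ 0)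
  rw [if_pos hle_rho, if_pos hle_rho']
  have hsub_rho : expVec 6 [l1, l2] - wperm rho = e2 l1 l2 := by
    ext j
    rw [Finsupp.tsub_apply, wr, e2_apply]
    fin_cases j
    · exact (by omega : l1 + 5 - (5 - 0) = l1)
    · exact (by omega : l2 + 4 - (5 - 1) = l2)
    · exact (by omega : (3:ℕ) - (5 - 2) = 0)
    · exact (by omega : (2:ℕ) - (5 - 3) = 0)
    · exact (by omega : (1:ℕ) - (5 - 4) = 0)
    · exact (by omega : (0:ℕ) - (5 - 5) = 0)
  have hsub_rho' : expVec 6 [l1, l2] - wperm rho' = e2 (l1+1) (l2-1) := by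
    ext j
    rw [Finsupp.tsub_apply, wr', e2_apply]
    fin_cases j
    · exact (by omega : l1 + 5 - 4 = l1 + 1)
    · exact (by omega : l2 + 4 - 5 = l2 - 1)
    · exact (by omega : (3:ℕ) - (5 - 2) = 0)
    · exact (by omega : (2:ℕ) - (5 - 3) = 0)
    · exact (by omega : (1:ℕ) - (5 - 4) = 0)
    · exact (by omega : (0:ℕ) - (5 - 5) = 0)
  rw [hsub_rho, hsub_rho']
  rw [show (Equiv.Perm.sign rho : ℤ) = -1 from by decide,
    show (Equiv.Perm.sign rho' : ℤ) = 1 from by decide]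
  ring

private lemma mono_e2 (a b : ℕ) :
    (X 0 ^ a * X 1 ^ b : MvPolynomial (Fin 6) ℤ) = monomial (e2 a b) 1 := by
  rw [MvPolynomial.X_pow_eq_monomial, MvPolynomial.X_pow_eq_monomial,
    MvPolynomial.monomial_mul, one_mul, e2]

private lemma coeff_S2 (q1 q2 C D : ℕ) :
    coeff (e2 C D) (S2 q1 q2)
      = if q2 ≤ C ∧ C ≤ q1 ∧ D = q1 + q2 - C then (1:ℤ) else 0 := by
  rw [S2, MvPolynomial.coeff_sum]
  have h1 : ∀ j ∈ Finset.Icc q2 q1,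
      coeff (e2 C D) (X 0 ^ j * X 1 ^ (q1 + q2 - j) : MvPolynomial (Fin 6) ℤ)
        = if j = C ∧ q1 + q2 - j = D then (1:ℤ) else 0 := by
    intro j _
    rw [mono_e2, MvPolynomial.coeff_monomial]
    exact if_congr (by rw [e2_inj]) rfl rfl
  rw [Finset.sum_congr rfl h1, sum_ind_eq (Finset.Icc q2 q1) C (fun j => q1 + q2 - j = D)]
  simp only [Finset.mem_Icc]
  split_ifs with h1 h2 <;> first | rfl | omega

private lemma e2_add_left (A B : ℕ) : e2 (A+1) B = Finsupp.single 0 1 + e2 A B := by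
  rw [e2, e2, Finsupp.single_add]
  abel

private lemma e2_add_right (A B : ℕ) : e2 A (B+1) = Finsupp.single 1 1 + e2 A B := by
  rw [e2, e2, Finsupp.single_add]
  abel

private lemma coeff_Ymul (g : MvPolynomial (Fin 6) ℤ) (A B : ℕ) (hB : 1 ≤ B) :
    coeff (e2 (A+1) B) ((X 0 - X 1) * g)
      = coeff (e2 A B) g - coeff (e2 (A+1) (B-1)) g := by
  rw [sub_mul, coeff_sub]
  congr 1
  · rw [e2_add_left, MvPolynomial.coeff_X_mul]
  · rw [show e2 (A+1) B = Finsupp.single 1 1 + e2 (A+1) (B-1) from by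
      rw [← e2_add_right]; congr 1; omega]
    rw [MvPolynomial.coeff_X_mul]

private lemma e2_supp (A B : ℕ) : ∀ i : Fin 6, 2 ≤ (i : ℕ) → e2 A B i = 0 := by
  intro i hi
  rw [e2_apply, if_neg, if_neg]
  · intro h; subst h; simp at hi
  · intro h; subst h; simp at hi

private lemma lrc (l1 l2 p1 p2 q1 q2 : ℕ) (hp : p2 ≤ p1) (hq : q2 ≤ q1) (hl2 : 1 ≤ l2) :
    lrCoeff [l1, l2] [p1, p2] [q1, q2] =
      (if p1 ≤ l1 ∧ p2 ≤ l2 ∧ q2 + p1 ≤ l1 ∧ l1 ≤ q1 + p1 ∧ l2 - p2 = q1 + q2 - (l1 - p1)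
        then (1:ℤ) else 0)
      - (if p2 ≤ l1 + 1 ∧ p1 + 1 ≤ l2 ∧ q2 + p2 ≤ l1 + 1 ∧ l1 + 1 ≤ q1 + p2
            ∧ l2 - (p1+1) = q1 + q2 - (l1 + 1 - p2)
        then (1:ℤ) else 0) := by
  have h0 : lrCoeff [l1, l2] [p1, p2] [q1, q2]
      = coeff (expVec 6 [l1, l2])
          ((schurPoly (Fin 6) [p1, p2] * schurPoly (Fin 6) [q1, q2]) * vanderPoly 6) := rfl
  rw [h0, vand _ l1 l2 hl2,
    ← coeff_kil _ (e2 l1 l2) (e2_supp l1 l2),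
    ← coeff_kil _ (e2 (l1+1) (l2-1)) (e2_supp (l1+1) (l2-1)),
    map_mul, kil_schur p1 p2 hp, kil_schur q1 q2 hq,
    ← coeff_Ymul (S2 p1 p2 * S2 q1 q2) l1 l2 hl2,
    ← mul_assoc, altS2 p1 p2 hp, sub_mul, coeff_sub, mono_e2, mono_e2,
    MvPolynomial.coeff_monomial_mul', MvPolynomial.coeff_monomial_mul',
    e2_sub, e2_sub, coeff_S2, coeff_S2]
  simp only [e2_le, one_mul]
  split_ifs <;> omega

end Helpers

/-- Let `m ≥ 1`, `0 ≤ k ≤ m/2` and `λ = (3m-2k, m+2k)`.  Then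
`Σ_{α,β ⊢ m} c^λ_{2α,2β} − Σ_{γ ⊢ m+1, δ ⊢ m-1} c^λ_{2γ,2δ} = 1`,
where all partitions `α,β,γ,δ` have at most two parts; a partition of `p` with at most
two parts is written `(p - t, t)` with `0 ≤ t ≤ p/2`. -/
theorem stmt6 (m k : ℕ) (hm : 1 ≤ m) (hk : 2 * k ≤ m) :
    (∑ s ∈ Finset.range (m / 2 + 1), ∑ t ∈ Finset.range (m / 2 + 1),
        lrCoeff [3*m - 2*k, m + 2*k] [2*(m - s), 2*s] [2*(m - t), 2*t]) -
    (∑ u ∈ Finset.range ((m + 1) / 2 + 1), ∑ v ∈ Finset.range ((m - 1) / 2 + 1),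
        lrCoeff [3*m - 2*k, m + 2*k] [2*(m + 1 - u), 2*u] [2*(m - 1 - v), 2*v]) = 1 := by
  rcases Nat.even_or_odd m with ⟨a, ha⟩ | ⟨a, ha⟩
  · -- even case : m = a + a, a ≥ 1
    subst ha
    have ha1 : 1 ≤ a := by omega
    rw [show (a + a) / 2 = a from by omega,
      show (a + a + 1) / 2 = a from by omega,
      show (a + a - 1) / 2 + 1 = a from by omega]
    have e1 : ∀ s ∈ Finset.range (a+1), ∀ t ∈ Finset.range (a+1),
        lrCoeff [3*(a+a) - 2*k, (a+a) + 2*k] [2*((a+a) - s), 2*s] [2*((a+a) - t), 2*t]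
        = (if k + t ≤ a + s ∧ s + t ≤ a + k then (1:ℤ) else 0)
          - (if a + t + 1 ≤ s + k then (1:ℤ) else 0) := by
      intro s hs t ht
      have hs' := Finset.mem_range.mp hs
      have ht' := Finset.mem_range.mp ht
      rw [lrc _ _ _ _ _ _ (by omega) (by omega) (by omega)]
      split_ifs <;> omega
    have e2 : ∀ u ∈ Finset.range (a+1), ∀ v ∈ Finset.range a,
        lrCoeff [3*(a+a) - 2*k, (a+a) + 2*k] [2*((a+a) + 1 - u), 2*u] [2*((a+a) - 1 - v), 2*v]
        = (if v + k + 1 ≤ a + u ∧ u + v ≤ a + k then (1:ℤ) else 0)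
          - (if a + v + 2 ≤ u + k then (1:ℤ) else 0) := by
      intro u hu v hv
      have hu' := Finset.mem_range.mp hu
      have hv' := Finset.mem_range.mp hv
      rw [lrc _ _ _ _ _ _ (by omega) (by omega) (by omega)]
      split_ifs <;> omega
    rw [Finset.sum_congr rfl (fun s hs => Finset.sum_congr rfl (e1 s hs)),
      Finset.sum_congr rfl (fun u hu => Finset.sum_congr rfl (e2 u hu))]
    exact core a k (by omega)
  · -- odd case : m = 2*a + 1
    subst ha
    have hka : k ≤ a := by omega
    rw [show (2*a + 1) / 2 = a from by omega,
      show (2*a + 1 + 1) / 2 + 1 = (a + 1) + 1 from by omega,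
      show (2*a + 1 - 1) / 2 = a from by omega]
    have e1 : ∀ s ∈ Finset.range (a+1), ∀ t ∈ Finset.range (a+1),
        lrCoeff [3*(2*a+1) - 2*k, (2*a+1) + 2*k] [2*((2*a+1) - s), 2*s] [2*((2*a+1) - t), 2*t]
        = (if k + t ≤ a + s ∧ s + t ≤ a + k then (1:ℤ) else 0)
          - (if a + t + 1 ≤ s + k then (1:ℤ) else 0) := by
      intro s hs t ht
      have hs' := Finset.mem_range.mp hs
      have ht' := Finset.mem_range.mp ht
      rw [lrc _ _ _ _ _ _ (by omega) (by omega) (by omega)]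
      split_ifs <;> omega
    have e2 : ∀ u ∈ Finset.range (a+2), ∀ v ∈ Finset.range (a+1),
        lrCoeff [3*(2*a+1) - 2*k, (2*a+1) + 2*k] [2*((2*a+1) + 1 - u), 2*u] [2*((2*a+1) - 1 - v), 2*v]
        = (if v + k + 1 ≤ a + u ∧ u + v ≤ a + k then (1:ℤ) else 0)
          - (if a + v + 2 ≤ u + k then (1:ℤ) else 0) := by
      intro u hu v hv
      have hu' := Finset.mem_range.mp hu
      have hv' := Finset.mem_range.mp hv
      rw [lrc _ _ _ _ _ _ (by omega) (by omega) (by omega)]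
      split_ifs <;> omega
    rw [Finset.sum_congr rfl (fun s hs => Finset.sum_congr rfl (e1 s hs)),
      Finset.sum_congr rfl (fun u hu => Finset.sum_congr rfl (e2 u hu))]
    have hpeel : (∑ u ∈ Finset.range (a+1+1), ∑ v ∈ Finset.range (a+1),
        ((if v + k + 1 ≤ a + u ∧ u + v ≤ a + k then (1:ℤ) else 0)
          - (if a + v + 2 ≤ u + k then (1:ℤ) else 0)))
      = ∑ u ∈ Finset.range (a+1), ∑ v ∈ Finset.range a,
        ((if v + k + 1 ≤ a + u ∧ u + v ≤ a + k then (1:ℤ) else 0)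
          - (if a + v + 2 ≤ u + k then (1:ℤ) else 0)) := by
      rw [Finset.sum_range_succ]
      have hlast : (∑ v ∈ Finset.range (a+1),
          ((if v + k + 1 ≤ a + (a+1) ∧ (a+1) + v ≤ a + k then (1:ℤ) else 0)
            - (if a + v + 2 ≤ (a+1) + k then (1:ℤ) else 0))) = 0 := by
        apply Finset.sum_eq_zero
        intro v hv
        have hv' := Finset.mem_range.mp hv
        split_ifs <;> omega
      rw [hlast, add_zero]
      apply Finset.sum_congr rfl
      intro u hu
      have hu' := Finset.mem_range.mp hu
      rw [Finset.sum_range_succ]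
      have hzero : ((if a + k + 1 ≤ a + u ∧ u + a ≤ a + k then (1:ℤ) else 0)
            - (if a + a + 2 ≤ u + k then (1:ℤ) else 0)) = 0 := by
        split_ifs <;> omega
      rw [hzero, add_zero]
    rw [hpeel]
    exact core a k hka
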